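/- Let y: ℝ → ℝ be nondecreasing and Lipschitz with y_ξ ≥ 0, and let H be nondecreasing Lipschitz with y + H = id. Suppose r = 1_{[0,1]} and r̄ = -1_{[0,1]}, and for 0 < ε < 1 define f^ε(ξ) = ξ for ξ < 0, f^ε(ξ) = εξ for 0 ≤ ξ < 1/ε, f^ε(ξ) = ξ + 1 - 1/ε for ξ ≥ 1/ε. Then f^ε ∈ G and ‖(r∘f^ε)·(f^ε)' - (r̄∘f^ε)·(f^ε)'‖_{L²(ℝ)} ≤ 2√ε. -/

import Mathlib

open MeasureTheory ENNReal

/-- The relabeling group as a set of homeomorphisms of `ℝ`. -/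
def Gset : Set (ℝ ≃ₜ ℝ) :=
  {f | (∃ C, LipschitzWith C (fun x => f x - x)) ∧
       BddAbove (Set.range fun x => |f x - x|) ∧
       (∃ C, LipschitzWith C (fun x => f.symm x - x)) ∧
       BddAbove (Set.range fun x => |f.symm x - x|) ∧
       MemLp (fun x => deriv (⇑f) x - 1) 2 volume}

/-- The relabeling `f^ε`. -/
noncomputable def fEps (ε ξ : ℝ) : ℝ :=
  if ξ < 0 then ξ else if ξ < 1 / ε then ε * ξ else ξ + 1 - 1 / ε

/-- The inverse relabeling. -/
noncomputable def gEps (ε ξ : ℝ) : ℝ := ξ + (1 / ε - 1) * min (max ξ 0) 1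

lemma clamp_abs (c x y : ℝ) : |min (max x 0) c - min (max y 0) c| ≤ |x - y| := by
  refine (abs_min_sub_min_le_max _ _ _ _).trans ?_
  simp only [sub_self, abs_zero]
  refine max_le ((abs_max_sub_max_le_max _ _ _ _).trans ?_) (abs_nonneg _)
  simp [abs_nonneg]

lemma lipschitz_clamp_mul (a c : ℝ) :
    LipschitzWith ‖a‖₊ (fun x : ℝ => a * min (max x 0) c) := by
  refine LipschitzWith.of_dist_le_mul fun x y => ?_
  simp only [Real.dist_eq, coe_nnnorm, Real.norm_eq_abs]
  rw [← mul_sub, abs_mul]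
  exact mul_le_mul_of_nonneg_left (clamp_abs c x y) (abs_nonneg a)

lemma fEps_closed {ε : ℝ} (hε : 0 < ε) (ξ : ℝ) :
    fEps ε ξ = ξ - (1 - ε) * min (max ξ 0) (1 / ε) := by
  have hεi : 0 < 1 / ε := by positivity
  unfold fEps
  rcases lt_or_ge ξ 0 with h | h
  · rw [if_pos h, max_eq_right h.le, min_eq_left hεi.le]; ring
  · rw [if_neg (not_lt.2 h), max_eq_left h]
    rcases lt_or_ge ξ (1 / ε) with h2 | h2
    · rw [if_pos h2, min_eq_left h2.le]; ring
    · rw [if_neg (not_lt.2 h2), min_eq_right h2]; field_simp; ring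

lemma gEps_fEps {ε : ℝ} (hε : 0 < ε) (ξ : ℝ) : gEps ε (fEps ε ξ) = ξ := by
  have hεi : 0 < 1 / ε := by positivity
  unfold fEps gEps
  rcases lt_or_ge ξ 0 with h | h
  · rw [if_pos h, max_eq_right h.le, min_eq_left zero_le_one]; ring
  · rw [if_neg (not_lt.2 h)]
    rcases lt_or_ge ξ (1 / ε) with h2 | h2
    · rw [if_pos h2]
      have h3 : 0 ≤ ε * ξ := by positivity
      have h4 : ε * ξ < 1 := by
        have := mul_lt_mul_of_pos_left h2 hε
        rwa [mul_one_div, div_self hε.ne'] at this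
      rw [max_eq_left h3, min_eq_left h4.le]
      field_simp
      ring
    · rw [if_neg (not_lt.2 h2)]
      have h3 : (1 : ℝ) ≤ ξ + 1 - 1 / ε := by linarith
      rw [max_eq_left (by linarith), min_eq_right h3]; ring

lemma fEps_gEps {ε : ℝ} (hε : 0 < ε) (ξ : ℝ) : fEps ε (gEps ε ξ) = ξ := by
  have hεi : 0 < 1 / ε := by positivity
  unfold fEps gEps
  rcases lt_or_ge ξ 0 with h | h
  · rw [max_eq_right h.le, min_eq_left zero_le_one, mul_zero, add_zero, if_pos h]
  · rcases lt_or_ge ξ 1 with h2 | h2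
    · rw [max_eq_left h, min_eq_left h2.le]
      have he : ξ + (1 / ε - 1) * ξ = ξ / ε := by field_simp; ring
      have hlt : ξ / ε < 1 / ε := by
        apply div_lt_div_of_pos_right h2 hε
      rw [he, if_neg (not_lt.2 (by positivity)), if_pos hlt]
      field_simp
    · rw [max_eq_left (by linarith), min_eq_right h2, mul_one]
      have h3 : ¬ ξ + (1 / ε - 1) < 0 := by push_neg; linarith
      rw [if_neg h3, if_neg (by push_neg; linarith)]
      ring

lemma continuous_fEps {ε : ℝ} (hε : 0 < ε) : Continuous (fEps ε) := by
  have : fEps ε = fun ξ => ξ - (1 - ε) * min (max ξ 0) (1 / ε) := funext (fEps_closed hε)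
  rw [this]; fun_prop

lemma continuous_gEps (ε : ℝ) : Continuous (gEps ε) := by
  unfold gEps; fun_prop

noncomputable def fHomeo (ε : ℝ) (hε : 0 < ε) : ℝ ≃ₜ ℝ :=
  { toFun := fEps ε
    invFun := gEps ε
    left_inv := gEps_fEps hε
    right_inv := fEps_gEps hε
    continuous_toFun := continuous_fEps hε
    continuous_invFun := continuous_gEps ε }

lemma deriv_fEps {ε : ℝ} (hε : 0 < ε) {ξ : ℝ} (h1 : ξ ≠ 0) (h2 : ξ ≠ 1 / ε) :
    deriv (fEps ε) ξ = if 0 < ξ ∧ ξ < 1 / ε then ε else 1 := by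
  have hεi : 0 < 1 / ε := by positivity
  rcases lt_trichotomy ξ 0 with h | h | h
  · have hev : fEps ε =ᶠ[nhds ξ] id := by
      filter_upwards [Iio_mem_nhds h] with x hx
      simp only [fEps, id_eq]
      rw [if_pos (Set.mem_Iio.1 hx)]
    rw [hev.deriv_eq, deriv_id, if_neg (fun hc => absurd hc.1 (not_lt.2 h.le))]
  · exact absurd h h1
  · rcases lt_or_gt_of_ne h2 with h2' | h2'
    · have hev : fEps ε =ᶠ[nhds ξ] (fun x => ε * x) := by
        filter_upwards [Ioo_mem_nhds h h2'] with x hx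
        simp only [fEps]
        rw [if_neg (not_lt.2 hx.1.le), if_pos hx.2]
      rw [hev.deriv_eq, if_pos ⟨h, h2'⟩]
      simpa using ((hasDerivAt_id ξ).const_mul ε).deriv
    · have hev : fEps ε =ᶠ[nhds ξ] (fun x => x + 1 - 1 / ε) := by
        filter_upwards [Ioi_mem_nhds h2'] with x hx
        have hx' : 1 / ε < x := Set.mem_Ioi.1 hx
        simp only [fEps]
        rw [if_neg (not_lt.2 (hεi.trans hx').le), if_neg (not_lt.2 hx'.le)]
      rw [hev.deriv_eq, if_neg (fun hc => absurd hc.2 (not_lt.2 h2'.le))]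
      simpa using (((hasDerivAt_id ξ).add_const 1).sub_const (1 / ε)).deriv

/-- `f^ε ∈ G`, and relabeling both `r = 1_{[0,1]}` and `r̄ = -1_{[0,1]}` by `f^ε`
makes their difference small in `L²`: `‖(r∘f^ε)(f^ε)' - (r̄∘f^ε)(f^ε)'‖₂ ≤ 2√ε`. -/
theorem symmetric_relabel_does_not_separate
    (y U H : ℝ → ℝ) (Ky KH : NNReal)
    (hy : LipschitzWith Ky y) (hymono : Monotone y)
    (hH : LipschitzWith KH H) (hHmono : Monotone H)
    (hid : ∀ ξ, y ξ + H ξ = ξ)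
    (r rb : ℝ → ℝ)
    (hr : r = Set.indicator (Set.Icc (0 : ℝ) 1) 1)
    (hrb : rb = fun ξ => -Set.indicator (Set.Icc (0 : ℝ) 1) 1 ξ)
    (ε : ℝ) (hε0 : 0 < ε) (hε1 : ε < 1) :
    (∃ f : ℝ ≃ₜ ℝ, (∀ ξ, f ξ = fEps ε ξ) ∧ f ∈ Gset) ∧
    eLpNorm (fun ξ =>
        r (fEps ε ξ) * deriv (fEps ε) ξ - rb (fEps ε ξ) * deriv (fEps ε) ξ)
      2 volume ≤ ENNReal.ofReal (2 * Real.sqrt ε) := by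
  have hεi : 0 < 1 / ε := by positivity
  -- a.e. facts
  have hm : volume ({0, 1 / ε} : Set ℝ) = 0 :=
    Set.Countable.measure_zero (Set.to_countable _) _
  have hae0 : ∀ᵐ x ∂(volume : Measure ℝ), x ≠ 0 ∧ x ≠ 1 / ε := by
    have := measure_eq_zero_iff_ae_notMem.mp hm
    filter_upwards [this] with x hx
    simp only [Set.mem_insert_iff, Set.mem_singleton_iff, not_or] at hx
    exact hx
  constructor
  · refine ⟨fHomeo ε hε0, fun ξ => rfl, ?_, ?_, ?_, ?_, ?_⟩
    · refine ⟨‖-(1 - ε)‖₊, ?_⟩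
      have he : (fun x => fHomeo ε hε0 x - x)
          = fun x => -(1 - ε) * min (max x 0) (1 / ε) := by
        funext x
        show fEps ε x - x = _
        rw [fEps_closed hε0]; ring
      rw [he]; exact lipschitz_clamp_mul _ _
    · refine ⟨(1 - ε) * (1 / ε), ?_⟩
      rintro v ⟨x, rfl⟩
      show |fEps ε x - x| ≤ _
      rw [fEps_closed hε0]
      have h0 : (0 : ℝ) ≤ min (max x 0) (1 / ε) := le_min (le_max_right _ _) hεi.le
      have h1 : min (max x 0) (1 / ε) ≤ 1 / ε := min_le_right _ _
      have : |x - (1 - ε) * min (max x 0) (1 / ε) - x| = (1 - ε) * min (max x 0) (1 / ε) := by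
        rw [show x - (1 - ε) * min (max x 0) (1 / ε) - x = -((1 - ε) * min (max x 0) (1 / ε)) by ring,
          abs_neg, abs_of_nonneg (by nlinarith)]
      rw [this]
      nlinarith
    · refine ⟨‖(1 / ε - 1)‖₊, ?_⟩
      have he : (fun x => (fHomeo ε hε0).symm x - x)
          = fun x => (1 / ε - 1) * min (max x 0) 1 := by
        funext x
        show gEps ε x - x = _
        unfold gEps; ring
      rw [he]; exact lipschitz_clamp_mul _ _
    · refine ⟨(1 / ε - 1) * 1, ?_⟩
      rintro v ⟨x, rfl⟩
      show |gEps ε x - x| ≤ _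
      unfold gEps
      have h0 : (0 : ℝ) ≤ min (max x 0) 1 := le_min (le_max_right _ _) zero_le_one
      have h1 : min (max x 0) 1 ≤ 1 := min_le_right _ _
      have he1 : (1 : ℝ) ≤ 1 / ε := by
        rw [le_div_iff₀ hε0]; linarith
      rw [show x + (1 / ε - 1) * min (max x 0) 1 - x = (1 / ε - 1) * min (max x 0) 1 by ring,
        abs_of_nonneg (by nlinarith)]
      nlinarith
    · -- Memℒp of deriv - 1
      have hae : (fun x => deriv (⇑(fHomeo ε hε0)) x - 1)
          =ᵐ[volume] (Set.Ioo (0 : ℝ) (1 / ε)).indicator (fun _ => ε - 1) := by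
        filter_upwards [hae0] with x hx
        have hc : ⇑(fHomeo ε hε0) = fEps ε := rfl
        rw [hc, deriv_fEps hε0 hx.1 hx.2]
        by_cases hmem : x ∈ Set.Ioo (0 : ℝ) (1 / ε)
        · rw [Set.indicator_of_mem hmem, if_pos ⟨hmem.1, hmem.2⟩]
        · rw [Set.indicator_of_notMem hmem,
            if_neg (by simpa [Set.mem_Ioo] using hmem)]
          ring
      exact (memLp_indicator_const 2 measurableSet_Ioo (ε - 1)
        (Or.inr measure_Ioo_lt_top.ne)).ae_eq hae.symm
  · -- the norm bound
    have hae : (fun ξ => r (fEps ε ξ) * deriv (fEps ε) ξ - rb (fEps ε ξ) * deriv (fEps ε) ξ)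
        =ᵐ[volume] (Set.Ioo (0 : ℝ) (1 / ε)).indicator (fun _ => (2 * ε : ℝ)) := by
      filter_upwards [hae0] with ξ hξ
      rcases lt_trichotomy ξ 0 with h | h | h
      · have hd : deriv (fEps ε) ξ = 1 := by
          rw [deriv_fEps hε0 hξ.1 hξ.2, if_neg (fun hc => absurd hc.1 (not_lt.2 h.le))]
        have hf : fEps ε ξ = ξ := by simp only [fEps]; rw [if_pos h]
        have hni : ξ ∉ Set.Icc (0 : ℝ) 1 := fun hc => absurd hc.1 (not_le.2 h)
        have hni2 : ξ ∉ Set.Ioo (0 : ℝ) (1 / ε) := fun hc => absurd hc.1 (not_lt.2 h.le)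
        have hr0 : r (fEps ε ξ) = 0 := by
          rw [hr, hf]; exact Set.indicator_of_notMem hni _
        have hrb0 : rb (fEps ε ξ) = 0 := by
          rw [hrb]; simp only; rw [hf, Set.indicator_of_notMem hni]; ring
        rw [hr0, hrb0, hd, Set.indicator_of_notMem hni2]
        ring
      · exact absurd h hξ.1
      · rcases lt_or_gt_of_ne hξ.2 with h2 | h2
        · have hd : deriv (fEps ε) ξ = ε := by
            rw [deriv_fEps hε0 hξ.1 hξ.2, if_pos ⟨h, h2⟩]
          have hf : fEps ε ξ = ε * ξ := by
            simp only [fEps]; rw [if_neg (not_lt.2 h.le), if_pos h2]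
          have hmem : ε * ξ ∈ Set.Icc (0 : ℝ) 1 := by
            constructor
            · positivity
            · have := mul_lt_mul_of_pos_left h2 hε0
              rw [mul_one_div, div_self hε0.ne'] at this
              exact this.le
          have hr1 : r (fEps ε ξ) = 1 := by
            rw [hr, hf, Set.indicator_of_mem hmem, Pi.one_apply]
          have hrb1 : rb (fEps ε ξ) = -1 := by
            rw [hrb]; simp only; rw [hf, Set.indicator_of_mem hmem, Pi.one_apply]
          rw [hr1, hrb1, hd, Set.indicator_of_mem (Set.mem_Ioo.2 ⟨h, h2⟩)]
          ring
        · have hd : deriv (fEps ε) ξ = 1 := by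
            rw [deriv_fEps hε0 hξ.1 hξ.2, if_neg (fun hc => absurd hc.2 (not_lt.2 h2.le))]
          have hf : fEps ε ξ = ξ + 1 - 1 / ε := by
            simp only [fEps]
            rw [if_neg (not_lt.2 (hεi.trans h2).le), if_neg (not_lt.2 h2.le)]
          have hni : ξ + 1 - 1 / ε ∉ Set.Icc (0 : ℝ) 1 := by
            intro hc
            have := hc.2
            linarith
          have hni2 : ξ ∉ Set.Ioo (0 : ℝ) (1 / ε) := fun hc => absurd hc.2 (not_lt.2 h2.le)
          have hr0 : r (fEps ε ξ) = 0 := by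
            rw [hr, hf]; exact Set.indicator_of_notMem hni _
          have hrb0 : rb (fEps ε ξ) = 0 := by
            rw [hrb]; simp only; rw [hf, Set.indicator_of_notMem hni]; ring
          rw [hr0, hrb0, hd, Set.indicator_of_notMem hni2]
          ring
    rw [eLpNorm_congr_ae hae,
      eLpNorm_indicator_const measurableSet_Ioo (by norm_num) (by norm_num),
      Real.volume_Ioo, sub_zero]
    have h2e : ‖(2 * ε : ℝ)‖ₑ = ENNReal.ofReal (2 * ε) :=
      Real.enorm_eq_ofReal (by positivity)
    have htr : (1 : ℝ) / (2 : ℝ≥0∞).toReal = 1 / 2 := by norm_num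
    rw [h2e, htr, ENNReal.ofReal_rpow_of_pos hεi, ← ENNReal.ofReal_mul (by positivity)]
    apply ENNReal.ofReal_le_ofReal
    rw [← Real.sqrt_eq_rpow, one_div, Real.sqrt_inv]
    have hs : ε * (Real.sqrt ε)⁻¹ = Real.sqrt ε := by
      rw [← div_eq_mul_inv, Real.div_sqrt]
    rw [mul_assoc, hs]
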